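/- Let K be a 2×2 real matrix and M the associated 3×3 matrix M = [[k11², 2k11k12, k12²], [k11k21, k11k22 + k12k21, k12k22], [k21², 2k21k22, k22²]]. If both eigenvalues of K have absolute value strictly less than 1, then det(I - M) ≠ 0, i.e., I - M is invertible. -/

import Mathlib

open Matrix

theorem one_sub_M_invertible_of_stable (k11 k12 k21 k22 : ℝ)
    (K : Matrix (Fin 2) (Fin 2) ℝ) (hK : K = !![k11, k12; k21, k22])
    (M : Matrix (Fin 3) (Fin 3) ℝ)
    (hM : M = !![k11 ^ 2, 2 * k11 * k12, k12 ^ 2;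
                 k11 * k21, k11 * k22 + k12 * k21, k12 * k22;
                 k21 ^ 2, 2 * k21 * k22, k22 ^ 2])
    (hstab : ∀ lam : ℂ,
      lam ^ 2 - ((Matrix.trace K : ℝ) : ℂ) * lam + ((Matrix.det K : ℝ) : ℂ) = 0 → ‖lam‖ < 1) :
    Matrix.det (1 - M) ≠ 0 := by
  set t : ℝ := Matrix.trace K with ht
  set d : ℝ := Matrix.det K with hd
  have htv : t = k11 + k22 := by rw [ht, hK]; simp [Matrix.trace_fin_two]
  have hdv : d = k11 * k22 - k12 * k21 := by rw [hd, hK]; simp [Matrix.det_fin_two]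
  -- 1 is not a root
  have h1 : 1 - t + d ≠ 0 := by
    intro h
    have := hstab 1 (by
      rw [show ((1:ℂ)^2 - (t:ℂ)*1 + (d:ℂ)) = ((1 - t + d : ℝ) : ℂ) by push_cast; ring, h]
      simp)
    simp at this
  -- -1 is not a root
  have h2 : 1 + t + d ≠ 0 := by
    intro h
    have := hstab (-1) (by
      rw [show (((-1):ℂ)^2 - (t:ℂ)*(-1) + (d:ℂ)) = ((1 + t + d : ℝ) : ℂ) by push_cast; ring, h]
      simp)
    simp at this
  -- |d| < 1 via roots
  have habs : |d| < 1 := by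
    obtain ⟨w, hw⟩ : ∃ w : ℂ, w ^ 2 = (t : ℂ) ^ 2 - 4 * (d : ℂ) :=
      IsAlgClosed.exists_pow_nat_eq _ (n := 2) (by norm_num)
    set r1 : ℂ := ((t : ℂ) + w) / 2 with hr1
    set r2 : ℂ := ((t : ℂ) - w) / 2 with hr2
    have hroot1 : r1 ^ 2 - (t : ℂ) * r1 + (d : ℂ) = 0 := by
      rw [hr1]; linear_combination (1/4 : ℂ) * hw
    have hroot2 : r2 ^ 2 - (t : ℂ) * r2 + (d : ℂ) = 0 := by
      rw [hr2]; linear_combination (1/4 : ℂ) * hw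
    have hprod : r1 * r2 = (d : ℂ) := by
      rw [hr1, hr2]; linear_combination (-1/4 : ℂ) * hw
    have a1 := hstab r1 hroot1
    have a2 := hstab r2 hroot2
    have : ‖((d : ℂ))‖ < 1 := by
      rw [← hprod, norm_mul]
      calc ‖r1‖ * ‖r2‖ < 1 * 1 := by
            apply mul_lt_mul'' a1 a2 (norm_nonneg _) (norm_nonneg _)
        _ = 1 := by ring
    rwa [Complex.norm_real, Real.norm_eq_abs] at this
  have h3 : 1 - d ≠ 0 := by
    have := abs_lt.mp habs
    intro h; linarith
  have key : Matrix.det (1 - M) = (1 - d) * (1 - t + d) * (1 + t + d) := by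
    subst hM
    rw [htv, hdv]
    simp [Matrix.det_fin_three, Matrix.one_apply]
    ring
  rw [key]
  exact mul_ne_zero (mul_ne_zero h3 h1) h2
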